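/- Let S ∈ 𝒮 and let i ∈ N₀ with i ∉ S. If there exists i* ∈ S with r(i*) < r(i) and M_{i*} ⊆ M_i, then ρ_{i_1⋯i_M}(S) ≤ ρ_{i_1⋯i_M}(S ∪ {i}) for every tuple (i_1,…,i_M) ∈ L. -/
import Mathlib


namespace RobustAssortment

/-- `i` is the most preferred product of the assortment `S` under the ranking `σ`. -/
def isTop {n : ℕ} (σ : Equiv.Perm (Fin (n + 1))) (S : Finset (Fin (n + 1)))
    (i : Fin (n + 1)) : Prop :=
  i ∈ S ∧ ∀ j ∈ S, σ i ≤ σ j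

instance {n : ℕ} (σ : Equiv.Perm (Fin (n + 1))) (S : Finset (Fin (n + 1)))
    (i : Fin (n + 1)) : Decidable (isTop σ S i) := by
  unfold isTop; infer_instance
/-- Membership in the set `L` of tuples of products compatible with a common ranking. -/
def memL {n M : ℕ} (Sm : Fin M → Finset (Fin (n + 1)))
    (t : Fin M → Fin (n + 1)) : Prop :=
  ∃ σ : Equiv.Perm (Fin (n + 1)), ∀ m : Fin M, isTop σ (Sm m) (t m)

instance {n M : ℕ} (Sm : Fin M → Finset (Fin (n + 1))) (t : Fin M → Fin (n + 1)) :
    Decidable (memL Sm t) := by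
  unfold memL; infer_instance
/-- The quantity `ρ_{i_1⋯i_M}(S)`: the minimum revenue among products of `S` that can be
the top of `S` under a ranking corresponding to the tuple `t`. -/
noncomputable def rho {n M : ℕ} (Sm : Fin M → Finset (Fin (n + 1)))
    (r : Fin (n + 1) → ℝ) (t : Fin M → Fin (n + 1)) (S : Finset (Fin (n + 1))) : ℝ :=
  sInf {x | ∃ i ∈ S, (∃ σ : Equiv.Perm (Fin (n + 1)),
    (∀ m : Fin M, isTop σ (Sm m) (t m)) ∧ isTop σ S i) ∧ x = r i}

/-- Claim 2 of the paper: adding a product `i ∉ S` dominated in the sense that some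
`i* ∈ S` has smaller revenue and was offered in every past assortment in which `i` was
offered... (precisely: `r i* < r i` and `M_{i*} ⊆ M_i`) can only increase `ρ`. -/
theorem statement18 (n M : ℕ) (hn : 1 ≤ n) (hM : 1 ≤ M)
    (r : Fin (n + 1) → ℝ) (hr0 : r 0 = 0) (hr : StrictMono r)
    (Sm : Fin M → Finset (Fin (n + 1))) (hSm0 : ∀ m, (0 : Fin (n + 1)) ∈ Sm m)
    (S : Finset (Fin (n + 1))) (hS : 0 ∈ S)
    (i : Fin (n + 1)) (hiS : i ∉ S)
    (istar : Fin (n + 1)) (histar : istar ∈ S) (hri : r istar < r i)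
    (hMi : ∀ m : Fin M, istar ∈ Sm m → i ∈ Sm m) :
    ∀ t : Fin M → Fin (n + 1), memL Sm t →
      rho Sm r t S ≤ rho Sm r t (insert i S) := by
  intro t ht
  obtain ⟨σ0, hσ0⟩ := ht
  unfold rho
  -- bounded below
  have hbdd : BddBelow {x | ∃ j ∈ S, (∃ σ : Equiv.Perm (Fin (n + 1)),
      (∀ m : Fin M, isTop σ (Sm m) (t m)) ∧ isTop σ S j) ∧ x = r j} := by
    refine BddBelow.mono ?_ (Set.finite_range r).bddBelow
    rintro x ⟨j, -, -, rfl⟩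
    exact ⟨j, rfl⟩
  apply le_csInf
  · -- the set for insert i S is nonempty
    obtain ⟨j, hjmem, hjmin⟩ := Finset.exists_min_image (insert i S) (fun k => σ0 k)
      ⟨i, Finset.mem_insert_self i S⟩
    exact ⟨r j, j, hjmem, ⟨σ0, hσ0, hjmem, hjmin⟩, rfl⟩
  · rintro x ⟨j, hj, ⟨σ, hσm, hjmemT, hjtop⟩, rfl⟩
    rcases Finset.mem_insert.mp hjmemT with hji | hjS
    · -- j = i : construct modified permutation
      subst hji
      have hne : j ≠ istar := fun h => hiS (h ▸ histar)
      have hab : σ j < σ istar := by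
        have hle : σ j ≤ σ istar := hjtop istar (Finset.mem_insert_of_mem histar)
        exact lt_of_le_of_ne hle (fun h => hne (σ.injective h))
      set a := σ j with ha
      set b := σ istar with hb
      have hab' : a.val < b.val := hab
      have hbn : b.val < n + 1 := b.isLt
      let f : Fin (n + 1) → Fin (n + 1) := fun k =>
        if k.val = b.val then ⟨a.val + 1, by omega⟩
        else if h : a.val < k.val ∧ k.val < b.val then ⟨k.val + 1, by omega⟩ else k
      have hval : ∀ k, (f k).val =
          if k.val = b.val then a.val + 1
          else if a.val < k.val ∧ k.val < b.val then k.val + 1 else k.val := by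
        intro k
        simp only [f]
        split_ifs <;> rfl
      have hinj : Function.Injective f := by
        intro k k' h
        have h' : (f k).val = (f k').val := congrArg Fin.val h
        rw [hval, hval] at h'
        apply Fin.ext
        split_ifs at h' <;> omega
      let σ' : Equiv.Perm (Fin (n + 1)) :=
        Equiv.ofBijective f (Finite.injective_iff_bijective.mp hinj)
      let σ'' : Equiv.Perm (Fin (n + 1)) := σ.trans σ'
      have hσ'' : ∀ k, σ'' k = f (σ k) := fun k => rfl
      -- istar is the top of S under σ''
      have htopS : isTop σ'' S istar := by
        refine ⟨histar, fun k hk => ?_⟩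
        rw [Fin.le_def, hσ'', hσ'', hval, hval]
        have hak : a.val < (σ k).val := by
          have hle : σ j ≤ σ k := hjtop k (Finset.mem_insert_of_mem hk)
          have hkne : k ≠ j := fun h => hiS (h ▸ hk)
          have : σ j ≠ σ k := fun h => hkne (σ.injective h).symm
          have : a.val ≤ (σ k).val := hle
          omega
        split_ifs <;> omega
      -- each t m stays the top of Sm m under σ''
      have htopM : ∀ m, isTop σ'' (Sm m) (t m) := by
        intro m
        obtain ⟨htm, htmin⟩ := hσm m
        refine ⟨htm, fun k hk => ?_⟩
        rw [Fin.le_def, hσ'', hσ'', hval, hval]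
        have htk : (σ (t m)).val ≤ (σ k).val := htmin k hk
        by_cases hst : istar ∈ Sm m
        · have hiSm : j ∈ Sm m := hMi m hst
          have h1 : (σ (t m)).val ≤ a.val := htmin j hiSm
          split_ifs <;> omega
        · have hk1 : (σ k).val ≠ b.val := by
            intro h
            exact hst ((σ.injective (Fin.ext h : σ k = b)) ▸ hk)
          have hk2 : (σ (t m)).val ≠ b.val := by
            intro h
            exact hst ((σ.injective (Fin.ext h : σ (t m) = b)) ▸ htm)
          split_ifs <;> omega
      exact csInf_le_of_le hbdd ⟨istar, histar, ⟨σ'', htopM, htopS⟩, rfl⟩ hri.le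
    · -- j ∈ S : same permutation works
      refine csInf_le_of_le hbdd ⟨j, hjS, ⟨σ, hσm, hjS, fun k hk => ?_⟩, rfl⟩ le_rfl
      exact hjtop k (Finset.mem_insert_of_mem hk)

end RobustAssortment
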